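/- arXiv:1404.3882 — 2 statements merged into one kernel-verified Lean document; each statement's English description precedes it below -/
import Mathlib

section
/- There exists a constant c > 0 such that every finite simple graph G on n ≥ 1 vertices has at most c · n · 1.6181^{mw(G)} minimal separators, where mw(G) denotes the modular width of G. -/
open SimpleGraph

universe u

/-- Reachability in `G − S`: there is a walk whose support avoids `S`. -/
def AvoidReach {V : Type u} (G : SimpleGraph V) (S : Set V) (u v : V) : Prop :=
  ∃ w : G.Walk u v, ∀ x ∈ w.support, x ∉ S

/-- `S` is a `u,v`-separator of `G`: `u, v ∉ S` and `u,v` lie in different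
connected components of `G − S`. -/
def IsSep {V : Type u} (G : SimpleGraph V) (S : Set V) (u v : V) : Prop :=
  u ∉ S ∧ v ∉ S ∧ ¬ AvoidReach G S u v

/-- `S` is a minimal `u,v`-separator of `G`. -/
def IsMinSep {V : Type u} (G : SimpleGraph V) (S : Set V) (u v : V) : Prop :=
  IsSep G S u v ∧ ∀ T ⊂ S, ¬ IsSep G T u v

/-- `S` is a minimal separator of `G`. -/
def IsMinimalSeparator {V : Type u} (G : SimpleGraph V) (S : Set V) : Prop :=
  ∃ u v, IsMinSep G S u v

/-- `C` is a connected component of `G − S`. -/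
def IsCompOf {V : Type u} (G : SimpleGraph V) (S C : Set V) : Prop :=
  ∃ v, v ∉ S ∧ C = {x | AvoidReach G S v x}

/-- The neighbourhood of a vertex set `A`: vertices outside `A` with a neighbour in `A`. -/
def setNbhd {V : Type u} (G : SimpleGraph V) (A : Set V) : Set V :=
  {x | x ∉ A ∧ ∃ a ∈ A, G.Adj x a}

/-- `C` is a full component of `G − S` associated to `S`, i.e. `N(C) = S`. -/
def IsFullCompOf {V : Type u} (G : SimpleGraph V) (S C : Set V) : Prop :=
  IsCompOf G S C ∧ setNbhd G C = S

/-- `W` is a vertex cover of `G`. -/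
def IsVC {V : Type u} (G : SimpleGraph V) (W : Set V) : Prop :=
  ∀ ⦃a b⦄, G.Adj a b → a ∈ W ∨ b ∈ W

/-- The vertex cover number `vc(G)`. -/
noncomputable def vcNum {V : Type u} (G : SimpleGraph V) : ℕ :=
  sInf {n | ∃ W : Set V, IsVC G W ∧ W.ncard = n}

/-- A graph is chordal if every cycle on four or more vertices has a chord, i.e. an
edge of the graph between two vertices of the cycle that is not an edge of the cycle. -/
def IsChordalG {V : Type u} (G : SimpleGraph V) : Prop :=
  ∀ (v : V) (w : G.Walk v v), w.IsCycle → 4 ≤ w.length →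
    ∃ x ∈ w.support, ∃ y ∈ w.support, G.Adj x y ∧ s(x, y) ∉ w.edges

/-- `H` is a minimal triangulation of `G`: a chordal supergraph of `G` such that no graph
strictly between `G` and `H` is chordal. -/
def IsMinimalTriangulation {V : Type u} (G H : SimpleGraph V) : Prop :=
  G ≤ H ∧ IsChordalG H ∧ ∀ F : SimpleGraph V, G ≤ F → F < H → ¬ IsChordalG F

/-- `Ω` is a maximal clique of `H`. -/
def IsMaxClique {V : Type u} (H : SimpleGraph V) (Ω : Set V) : Prop :=
  H.IsClique Ω ∧ ∀ t : Set V, H.IsClique t → Ω ⊆ t → t = Ω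

/-- `Ω` is a potential maximal clique of `G`: a maximal clique of some
minimal triangulation of `G`. -/
def IsPMC {V : Type u} (G : SimpleGraph V) (Ω : Set V) : Prop :=
  ∃ H : SimpleGraph V, IsMinimalTriangulation G H ∧ IsMaxClique H Ω

/-- The class of graphs of modular width at most `k`, defined inductively:
(i) graphs with at most one vertex; (ii) disjoint unions of graphs in the class;
(iii) joins of graphs in the class; (iv) graphs whose vertex set can be partitioned
into `p ≤ k` modules, each inducing a graph in the class. -/
inductive MWLE (k : ℕ) : ∀ (V : Type), SimpleGraph V → Prop where
  | base (V : Type) (G : SimpleGraph V) (h : Subsingleton V) : MWLE k V G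
  | disjUnion (V : Type) (G : SimpleGraph V) (ι : Type) (P : ι → Set V)
      (hpart : ∀ x : V, ∃! i, x ∈ P i)
      (hrec : ∀ i, MWLE k (P i) (SimpleGraph.induce (P i) G))
      (hcross : ∀ i j, i ≠ j → ∀ x ∈ P i, ∀ y ∈ P j, ¬ G.Adj x y) :
      MWLE k V G
  | join (V : Type) (G : SimpleGraph V) (ι : Type) (P : ι → Set V)
      (hpart : ∀ x : V, ∃! i, x ∈ P i)
      (hrec : ∀ i, MWLE k (P i) (SimpleGraph.induce (P i) G))
      (hcross : ∀ i j, i ≠ j → ∀ x ∈ P i, ∀ y ∈ P j, G.Adj x y) :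
      MWLE k V G
  | modules (V : Type) (G : SimpleGraph V) (p : ℕ) (hp : p ≤ k) (P : Fin p → Set V)
      (hpart : ∀ x : V, ∃! i, x ∈ P i)
      (hrec : ∀ i, MWLE k (P i) (SimpleGraph.induce (P i) G))
      (hmod : ∀ i, ∀ x : V, x ∉ P i →
        (∀ y ∈ P i, G.Adj x y) ∨ (∀ y ∈ P i, ¬ G.Adj x y)) :
      MWLE k V G

/-- The modular width `mw(G)`: the least `k` such that `G` has modular width at most `k`. -/
noncomputable def mwNum {V : Type} (G : SimpleGraph V) : ℕ := sInf {k | MWLE k V G}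

section Basics

variable {V : Type u} {G : SimpleGraph V} {S T : Set V} {u v x y : V}

lemma avoidReach_refl (h : u ∉ S) : AvoidReach G S u u :=
  ⟨SimpleGraph.Walk.nil, by simp [h]⟩

lemma AvoidReach.symm (h : AvoidReach G S u v) : AvoidReach G S v u := by
  obtain ⟨w, hw⟩ := h
  exact ⟨w.reverse, by simpa using hw⟩

lemma AvoidReach.trans (h : AvoidReach G S u v) (h' : AvoidReach G S v x) :
    AvoidReach G S u x := by
  obtain ⟨w, hw⟩ := h
  obtain ⟨w', hw'⟩ := h'
  refine ⟨w.append w', fun z hz => ?_⟩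
  rw [SimpleGraph.Walk.support_append] at hz
  rcases List.mem_append.1 hz with hz | hz
  · exact hw z hz
  · exact hw' z (List.mem_of_mem_tail hz)

lemma AvoidReach.notMem_left (h : AvoidReach G S u v) : u ∉ S := by
  obtain ⟨w, hw⟩ := h
  exact hw u w.start_mem_support

lemma AvoidReach.notMem_right (h : AvoidReach G S u v) : v ∉ S := by
  obtain ⟨w, hw⟩ := h
  exact hw v w.end_mem_support

lemma avoidReach_of_adj (h : G.Adj u v) (hu : u ∉ S) (hv : v ∉ S) :
    AvoidReach G S u v := by
  refine ⟨h.toWalk, ?_⟩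
  intro z hz
  rcases hz with hz
  simp only [SimpleGraph.Walk.support_cons, SimpleGraph.Walk.support_nil,
    List.mem_cons, List.mem_singleton] at hz
  rcases hz with rfl | hz
  · exact hu
  · rcases hz with rfl | h'
    · exact hv
    · simp at h'

lemma AvoidReach.mono (hsub : T ⊆ S) (h : AvoidReach G S u v) : AvoidReach G T u v := by
  obtain ⟨w, hw⟩ := h
  exact ⟨w, fun z hz hzT => hw z hz (hsub hzT)⟩

/-- Every vertex on a walk avoiding `S` is avoid-reachable from both endpoints. -/
lemma avoidReach_of_mem_support {w : G.Walk u v} (hw : ∀ z ∈ w.support, z ∉ S)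
    (hx : x ∈ w.support) : AvoidReach G S u x := by
  haveI := Classical.decEq V
  exact ⟨w.takeUntil x hx, fun z hz => hw z (w.support_takeUntil_subset hx hz)⟩

lemma IsMinSep.ne (h : IsMinSep G S u v) : u ≠ v := by
  rintro rfl
  exact h.1.2.2 (avoidReach_refl h.1.1)

private lemma reach_or_nbr {V : Type u} {G : SimpleGraph V} {S : Set V} {x v : V} :
    ∀ (a : V) (w : G.Walk a v), (∀ z ∈ w.support, z ∉ S \ {x}) → a ∉ S →
      AvoidReach G S a v ∨ ∃ b, G.Adj b x ∧ AvoidReach G S a b := by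
  intro a w
  induction w with
  | nil => intro _ ha; exact Or.inl (avoidReach_refl ha)
  | @cons c d e hadj p ih =>
    intro hsup hc
    by_cases hd : d = x
    · subst hd
      exact Or.inr ⟨c, hadj, avoidReach_refl hc⟩
    · have hdS : d ∉ S := by
        intro hdS
        exact (hsup d (by simp)) ⟨hdS, hd⟩
      have := ih (fun z hz => hsup z (by simp [hz])) hdS
      rcases this with h1 | ⟨b, hb1, hb2⟩
      · exact Or.inl ((avoidReach_of_adj hadj hc hdS).trans h1)
      · exact Or.inr ⟨b, hb1, (avoidReach_of_adj hadj hc hdS).trans hb2⟩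

/-- Key minimality lemma: every vertex of a minimal `u,v`-separator has a neighbour
in the component of `u`. -/
lemma IsMinSep.exists_nbr (h : IsMinSep G S u v) (hx : x ∈ S) :
    ∃ a, G.Adj a x ∧ AvoidReach G S u a := by
  have hT : ¬ IsSep G (S \ {x}) u v := h.2 _ ⟨Set.diff_subset, fun hs => (hs hx).2 rfl⟩
  have hu : u ∉ S := h.1.1
  have hv : v ∉ S := h.1.2.1
  have hAR : AvoidReach G (S \ {x}) u v := by
    by_contra hno
    exact hT ⟨fun hh => hu hh.1, fun hh => hv hh.1, hno⟩
  obtain ⟨w, hw⟩ := hAR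
  rcases reach_or_nbr u w hw hu with h1 | h2
  · exact absurd h1 h.1.2.2
  · exact h2

lemma IsMinSep.symm (h : IsMinSep G S u v) : IsMinSep G S v u := by
  obtain ⟨⟨h1, h2, h3⟩, hmin⟩ := h
  refine ⟨⟨h2, h1, fun hc => h3 hc.symm⟩, fun T hT hsep => ?_⟩
  exact hmin T hT ⟨hsep.2.1, hsep.1, fun hc => hsep.2.2 hc.symm⟩

end Basics
section Partition

variable {V : Type u} {ι : Type w}

/-- The quotient graph of a partition into modules. -/
def quotG (G : SimpleGraph V) (P : ι → Set V) : SimpleGraph ι where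
  Adj i j := i ≠ j ∧ ∃ x ∈ P i, ∃ y ∈ P j, G.Adj x y
  symm := ⟨by
    rintro i j ⟨hne, x, hx, y, hy, h⟩
    exact ⟨hne.symm, y, hy, x, hx, h.symm⟩⟩
  loopless := ⟨fun i h => h.1 rfl⟩

variable {G : SimpleGraph V} {P : ι → Set V}

section withPart

variable (hpart : ∀ x : V, ∃! i, x ∈ P i)

noncomputable def pidx (x : V) : ι := (hpart x).choose

lemma mem_pidx (x : V) : x ∈ P (pidx hpart x) := (hpart x).choose_spec.1

lemma pidx_eq {x : V} {i : ι} (h : x ∈ P i) : pidx hpart x = i :=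
  ((hpart x).choose_spec.2 i h).symm

include hpart in
lemma parts_disj {x : V} {i j : ι} (hi : x ∈ P i) (hj : x ∈ P j) : i = j := by
  rw [← pidx_eq hpart hi, ← pidx_eq hpart hj]

variable (hmod : ∀ i, ∀ x : V, x ∉ P i →
    (∀ y ∈ P i, G.Adj x y) ∨ (∀ y ∈ P i, ¬ G.Adj x y))

include hpart hmod in
lemma quot_uniform {i j : ι} {x y : V} (h : (quotG G P).Adj i j)
    (hx : x ∈ P i) (hy : y ∈ P j) : G.Adj x y := by
  obtain ⟨hne, x₀, hx₀, y₀, hy₀, hadj⟩ := h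
  have hy₀i : y₀ ∉ P i := fun hc => hne (parts_disj hpart hc hy₀)
  have h1 : ∀ z ∈ P i, G.Adj y₀ z := by
    rcases hmod i y₀ hy₀i with h | h
    · exact h
    · exact absurd hadj.symm (h x₀ hx₀)
  have hxj : x ∉ P j := fun hc => hne (parts_disj hpart hx hc)
  rcases hmod j x hxj with h | h
  · exact h y hy
  · exact absurd (h1 x hx).symm (h y₀ hy₀)

-- Vertices outside `P i` adjacent to all of `P i`.
include hmod in
lemma allAdj_of_adj {i : ι} {x y : V} (hx : x ∉ P i) (hy : y ∈ P i) (h : G.Adj x y) :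
    ∀ z ∈ P i, G.Adj x z := by
  rcases hmod i x hx with h' | h'
  · exact h'
  · exact absurd h (h' y hy)

-- Walk confinement: a walk starting in a module avoiding all outside vertices adjacent to the whole module stays inside the module.
include hmod in
lemma walk_confine {i : ι} : ∀ {a b : V} (w : G.Walk a b), a ∈ P i →
    (∀ z ∈ w.support, ¬ (z ∉ P i ∧ ∀ y ∈ P i, G.Adj z y)) →
    ∀ z ∈ w.support, z ∈ P i := by
  intro a b w
  induction w with
  | nil =>
    intro ha _ z hz
    simp only [SimpleGraph.Walk.support_nil, List.mem_singleton] at hz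
    exact hz ▸ ha
  | @cons a c b hadj p ih =>
    intro ha hav z hz
    by_cases hc : c ∈ P i
    · rcases (by simpa using hz) with rfl | hz'
      · exact ha
      · exact ih hc (fun z hz => hav z (by simp [hz])) z hz'
    · exfalso
      exact hav c (by simp) ⟨hc, allAdj_of_adj hmod hc ha hadj.symm⟩

-- Walk exit: a walk avoiding `S` leaving a module passes through an outside vertex adjacent to the whole module.
include hmod in
lemma walk_exit {i : ι} {S : Set V} : ∀ {a b : V} (w : G.Walk a b), a ∈ P i → b ∉ P i →
    (∀ z ∈ w.support, z ∉ S) →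
    ∃ w', (w' ∉ P i ∧ ∀ y ∈ P i, G.Adj w' y) ∧ w' ∉ S ∧ AvoidReach G S a w' := by
  intro a b w
  induction w with
  | nil => intro ha hb _; exact absurd ha hb
  | @cons a c b hadj p ih =>
    intro ha hb hav
    have haS : a ∉ S := hav a (by simp)
    have hcS : c ∉ S := hav c (by simp)
    by_cases hc : c ∈ P i
    · obtain ⟨w', h1, h2, h3⟩ := ih hc hb (fun z hz => hav z (by simp [hz]))
      exact ⟨w', h1, h2, (avoidReach_of_adj hadj haS hcS).trans h3⟩
    · exact ⟨c, ⟨hc, allAdj_of_adj hmod hc ha hadj.symm⟩, hcS,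
        avoidReach_of_adj hadj haS hcS⟩

-- Projecting a walk to the quotient graph.
include hpart in
lemma walk_project : ∀ {a b : V} (w : G.Walk a b),
    ∃ W : (quotG G P).Walk (pidx hpart a) (pidx hpart b),
      ∀ j ∈ W.support, ∃ z ∈ w.support, z ∈ P j := by
  intro a b w
  induction w with
  | nil =>
    refine ⟨SimpleGraph.Walk.nil, ?_⟩
    intro j hj
    simp only [SimpleGraph.Walk.support_nil, List.mem_singleton] at hj
    exact ⟨_, by simp, hj ▸ mem_pidx hpart _⟩
  | @cons a c b hadj p ih =>
    obtain ⟨W', hW'⟩ := ih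
    by_cases hac : pidx hpart a = pidx hpart c
    · refine ⟨W'.copy hac.symm rfl, ?_⟩
      intro j hj
      rw [SimpleGraph.Walk.support_copy] at hj
      obtain ⟨z, hz, hzP⟩ := hW' j hj
      exact ⟨z, by simp [hz], hzP⟩
    · have hQ : (quotG G P).Adj (pidx hpart a) (pidx hpart c) :=
        ⟨hac, a, mem_pidx hpart a, c, mem_pidx hpart c, hadj⟩
      refine ⟨SimpleGraph.Walk.cons hQ W', ?_⟩
      intro j hj
      rcases (by simpa using hj) with rfl | hj'
      · exact ⟨a, by simp, mem_pidx hpart a⟩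
      · obtain ⟨z, hz, hzP⟩ := hW' j hj'
        exact ⟨z, by simp [hz], hzP⟩

-- Lifting a walk from the quotient graph, when the separator is a union of modules.
include hpart hmod in
lemma walk_lift {S : Set V} {J : Set ι} (hSJ : ∀ z : V, z ∈ S ↔ pidx hpart z ∈ J) :
    ∀ {c d : ι} (W : (quotG G P).Walk c d), (∀ j ∈ W.support, j ∉ J) →
    ∀ x ∈ P c, ∀ y ∈ P d, x ∉ S → y ∉ S → (x = y ∨ 1 ≤ W.length) →
    AvoidReach G S x y := by
  intro c d W
  induction W with
  | nil =>
    intro _ x hx y hy hxS hyS hor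
    rcases hor with rfl | h
    · exact avoidReach_refl hxS
    · simp at h
  | @cons c e d hadj W' ih =>
    intro hsup x hx y hy hxS hyS _
    by_cases hlen : W'.length = 0
    · have : e = d := W'.eq_of_length_eq_zero hlen
      subst this
      exact avoidReach_of_adj (quot_uniform hpart hmod hadj hx hy) hxS hyS
    · obtain ⟨hne, x₀, hx₀, z, hz, _⟩ := id hadj
      have hzS : z ∉ S := by
        rw [hSJ, pidx_eq hpart hz]
        exact hsup e (by simp)
      have h1 : AvoidReach G S x z :=
        avoidReach_of_adj (quot_uniform hpart hmod hadj hx hz) hxS hzS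
      exact h1.trans (ih (fun j hj => hsup j (by simp [hj])) z hz y hy hzS hyS
        (Or.inr (Nat.one_le_iff_ne_zero.2 hlen)))

end withPart

end Partition
section Classify

variable {V : Type u} {ι : Type w}

/-- Vertices outside module `P i` adjacent to all of it. -/
def AllAdjSet (G : SimpleGraph V) (P : ι → Set V) (i : ι) : Set V :=
  {x | x ∉ P i ∧ ∀ y ∈ P i, G.Adj x y}

/-- Lift of a separator of an induced module. -/
def LiftSep (G : SimpleGraph V) (P : ι → Set V) (i : ι) (T : Set (P i)) : Set V :=
  (Subtype.val '' T) ∪ AllAdjSet G P i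

/-- Modules fully contained in `S`. -/
def JSet (P : ι → Set V) (S : Set V) : Set ι := {j | (P j).Nonempty ∧ P j ⊆ S}

/-- Quotient minimal separators between nonempty modules, all of whose modules
are nonempty. -/
def MsepQ (G : SimpleGraph V) (P : ι → Set V) : Set (Set ι) :=
  {J | ∃ a b, IsMinSep (quotG G P) J a b ∧ (P a).Nonempty ∧ (P b).Nonempty ∧
    ∀ j ∈ J, (P j).Nonempty}

variable {G : SimpleGraph V} {P : ι → Set V}

/-- A walk with support inside `P i` gives a walk of the induced graph. -/
lemma walk_to_induce {i : ι} : ∀ {a b : V} (w : G.Walk a b) (hw : ∀ z ∈ w.support, z ∈ P i),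
    ∃ W : (SimpleGraph.induce (P i) G).Walk
        ⟨a, hw a w.start_mem_support⟩ ⟨b, hw b w.end_mem_support⟩,
      ∀ z ∈ W.support, (z : V) ∈ w.support := by
  intro a b w
  induction w with
  | nil =>
    intro hw
    exact ⟨SimpleGraph.Walk.nil, by simp⟩
  | @cons a c b hadj p ih =>
    intro hw
    obtain ⟨W', hW'⟩ := ih (fun z hz => hw z (by simp [hz]))
    refine ⟨SimpleGraph.Walk.cons (by exact hadj) W', ?_⟩
    intro z hz
    rcases List.mem_cons.1 hz with h | h
    · simp [Subtype.ext_iff.1 h]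
    · exact by simp [hW' z h]

variable (hpart : ∀ x : V, ∃! i, x ∈ P i)
  (hmod : ∀ i, ∀ x : V, x ∉ P i →
    (∀ y ∈ P i, G.Adj x y) ∨ (∀ y ∈ P i, ¬ G.Adj x y))

include hpart hmod in
/-- The classification of minimal separators with respect to a modular partition. -/
theorem classify_minsep {S : Set V} (hS : IsMinimalSeparator G S) :
    (∃ i, ∃ T : Set (P i), IsMinimalSeparator (SimpleGraph.induce (P i) G) T ∧
        (P i).Nonempty ∧ S = LiftSep G P i T)
    ∨ (JSet P S ∈ MsepQ G P ∧ S = {z | pidx hpart z ∈ JSet P S}) := by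
  classical
  by_cases hcross : ∃ u v, IsMinSep G S u v ∧ pidx hpart u ≠ pidx hpart v
  · -- Case 2: a separating pair in different modules; S is a union of modules
    right
    obtain ⟨u, v, hmin, hne⟩ := hcross
    have hu : u ∉ S := hmin.1.1
    have hv : v ∉ S := hmin.1.2.1
    have hnr : ¬ AvoidReach G S u v := hmin.1.2.2
    -- each module is contained in S or disjoint from it
    have hfull : ∀ j, (S ∩ P j).Nonempty → P j ⊆ S := by
      rintro j ⟨x, hxS, hxP⟩
      intro y hyP
      by_contra hyS
      -- neighbours of x in both components
      obtain ⟨a, hax, hua⟩ := hmin.exists_nbr hxS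
      obtain ⟨b, hbx, hvb⟩ := hmin.symm.exists_nbr hxS
      have haS : a ∉ S := hua.notMem_right
      have hbS : b ∉ S := hvb.notMem_right
      -- produce vertices of P j reachable from u resp. v
      have hcu : ∃ cu, cu ∈ P j ∧ AvoidReach G S u cu := by
        by_cases ha : a ∈ P j
        · exact ⟨a, ha, hua⟩
        · have hall := allAdj_of_adj hmod ha hxP hax
          exact ⟨y, hyP, hua.trans (avoidReach_of_adj (hall y hyP) haS hyS)⟩
      have hcv : ∃ cv, cv ∈ P j ∧ AvoidReach G S v cv := by
        by_cases hb : b ∈ P j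
        · exact ⟨b, hb, hvb⟩
        · have hall := allAdj_of_adj hmod hb hxP hbx
          exact ⟨y, hyP, hvb.trans (avoidReach_of_adj (hall y hyP) hbS hyS)⟩
      obtain ⟨cu, hcuP, hucu⟩ := hcu
      obtain ⟨cv, hcvP, hvcv⟩ := hcv
      -- if a reachable endpoint lies outside P j we contradict separation
      have key : ∀ w z, AvoidReach G S w z → z ∈ P j → w ∉ P j →
          ∃ w', (∀ t ∈ P j, G.Adj w' t) ∧ w' ∉ S ∧ AvoidReach G S w w' := by
        intro w z hwz hzP hwP
        obtain ⟨wk, hwk⟩ := hwz.symm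
        obtain ⟨w', hw'1, hw'2, hw'3⟩ := walk_exit hmod wk hzP hwP hwk
        exact ⟨w', hw'1.2, hw'2, hwz.trans hw'3⟩
      have huP : u ∈ P j := by
        by_contra huP
        obtain ⟨w', hw'adj, hw'S, hw'r⟩ := key u cu hucu hcuP huP
        have h1 : AvoidReach G S u cv :=
          hw'r.trans (avoidReach_of_adj (hw'adj cv hcvP) hw'S hvcv.notMem_right)
        exact hnr (h1.trans hvcv.symm)
      have hvP : v ∈ P j := by
        by_contra hvP
        obtain ⟨w', hw'adj, hw'S, hw'r⟩ := key v cv hvcv hcvP hvP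
        have h1 : AvoidReach G S v cu :=
          hw'r.trans (avoidReach_of_adj (hw'adj cu hcuP) hw'S hucu.notMem_right)
        exact hnr (hucu.trans h1.symm)
      exact hne ((pidx_eq hpart huP).trans (pidx_eq hpart hvP).symm)
    -- S is the union of the modules it contains
    have hSJ : ∀ z : V, z ∈ S ↔ pidx hpart z ∈ JSet P S := by
      intro z
      constructor
      · intro hz
        exact ⟨⟨z, mem_pidx hpart z⟩, hfull _ ⟨z, hz, mem_pidx hpart z⟩⟩
      · intro hz
        exact hz.2 (mem_pidx hpart z)
    refine ⟨⟨pidx hpart u, pidx hpart v, ?_, ⟨u, mem_pidx hpart u⟩, ⟨v, mem_pidx hpart v⟩,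
      fun j hj => hj.1⟩, Set.ext hSJ⟩
    -- JSet is a minimal separator of the quotient
    have hJu : pidx hpart u ∉ JSet P S := fun hc => hu ((hSJ u).2 hc)
    have hJv : pidx hpart v ∉ JSet P S := fun hc => hv ((hSJ v).2 hc)
    refine ⟨⟨hJu, hJv, ?_⟩, ?_⟩
    · rintro ⟨W, hW⟩
      have hlen : 1 ≤ W.length := by
        rcases Nat.eq_zero_or_pos W.length with h | h
        · exact absurd (W.eq_of_length_eq_zero h) hne
        · exact h
      exact hnr (walk_lift hpart hmod hSJ W hW u (mem_pidx hpart u) v (mem_pidx hpart v)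
        hu hv (Or.inr hlen))
    · -- minimality in the quotient
      intro T hT hsep
      set ST : Set V := {z | pidx hpart z ∈ T} with hST
      have hsub : ST ⊂ S := by
        constructor
        · intro z hz
          exact (hSJ z).2 (hT.1 hz)
        · intro hSsub
          obtain ⟨j0, hj0J, hj0T⟩ := Set.exists_of_ssubset hT
          obtain ⟨z0, hz0⟩ := hj0J.1
          have : z0 ∈ ST := hSsub (hj0J.2 hz0)
          rw [hST] at this
          exact hj0T ((pidx_eq hpart hz0) ▸ this)
      have := hmin.2 ST hsub
      have hAR : AvoidReach G ST u v := by
        by_contra hno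
        exact this ⟨fun hc => hsep.1 hc, fun hc => hsep.2.1 hc, hno⟩
      obtain ⟨w, hw⟩ := hAR
      obtain ⟨W, hWsup⟩ := walk_project hpart w
      refine hsep.2.2 ⟨W, ?_⟩
      intro j hj hjT
      obtain ⟨z, hzw, hzP⟩ := hWsup j hj
      exact hw z hzw (by rw [hST]; exact Set.mem_setOf.2 ((pidx_eq hpart hzP) ▸ hjT))
  · -- Case 1: all separating pairs lie in a single module
    left
    obtain ⟨u, v, hmin⟩ := hS
    push_neg at hcross
    have hii := hcross u v hmin
    set i := pidx hpart u with hidef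
    have huP : u ∈ P i := mem_pidx hpart u
    have hvP : v ∈ P i := by rw [hii]; exact mem_pidx hpart v
    have hu : u ∉ S := hmin.1.1
    have hv : v ∉ S := hmin.1.2.1
    have hnr : ¬ AvoidReach G S u v := hmin.1.2.2
    -- reachable sets stay in the module
    have hCu : ∀ z, AvoidReach G S u z → z ∈ P i := by
      intro z hz
      by_contra hzP
      obtain ⟨wk, hwk⟩ := hz
      obtain ⟨w', ⟨hw'P, hw'adj⟩, hw'S, hw'r⟩ := walk_exit hmod wk huP hzP hwk
      exact hnr (hw'r.trans (avoidReach_of_adj ((hw'adj v hvP)) hw'S hv))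
    have hCv : ∀ z, AvoidReach G S v z → z ∈ P i := by
      intro z hz
      by_contra hzP
      obtain ⟨wk, hwk⟩ := hz
      obtain ⟨w', ⟨hw'P, hw'adj⟩, hw'S, hw'r⟩ := walk_exit hmod wk hvP hzP hwk
      exact hnr ((hw'r.trans (avoidReach_of_adj ((hw'adj u huP)) hw'S hu)).symm)
    -- the part of S outside the module
    have houter : S \ P i = AllAdjSet G P i := by
      ext x
      constructor
      · rintro ⟨hxS, hxP⟩
        obtain ⟨a, hax, hua⟩ := hmin.exists_nbr hxS
        exact ⟨hxP, allAdj_of_adj hmod hxP (hCu a hua) hax.symm⟩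
      · rintro ⟨hxP, hxadj⟩
        refine ⟨?_, hxP⟩
        by_contra hxS
        exact hnr ((avoidReach_of_adj (hxadj u huP).symm hu hxS).trans
          (avoidReach_of_adj (hxadj v hvP) hxS hv))
    set T : Set (P i) := Subtype.val ⁻¹' S with hTdef
    have hlift : S = LiftSep G P i T := by
      rw [LiftSep, hTdef, Subtype.image_preimage_coe, ← houter]
      ext z
      by_cases hz : z ∈ P i <;> simp [hz]
    refine ⟨i, T, ⟨⟨u, huP⟩, ⟨v, hvP⟩, ?_⟩, ⟨u, huP⟩, hlift⟩
    have hsepi : IsSep (SimpleGraph.induce (P i) G) T ⟨u, huP⟩ ⟨v, hvP⟩ := by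
      refine ⟨hu, hv, ?_⟩
      rintro ⟨W, hW⟩
      -- map the induced walk to G
      have hmap : AvoidReach G S u v := by
        let f : SimpleGraph.induce (P i) G →g G := ⟨Subtype.val, fun h => h⟩
        refine ⟨W.map f, ?_⟩
        intro z hz
        rw [SimpleGraph.Walk.support_map] at hz
        obtain ⟨z', hz', rfl⟩ := List.mem_map.1 hz
        intro hzS
        exact hW z' hz' hzS
      exact hnr hmap
    refine ⟨hsepi, ?_⟩
    intro T' hT' hsep'
    have hTbig : ((Subtype.val '' T') ∪ AllAdjSet G P i) ⊂ S := by
      constructor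
      · intro z hz
        rcases hz with ⟨z', hz', rfl⟩ | hz
        · exact hT'.1 hz'
        · rw [← houter] at hz
          exact hz.1
      · intro hSsub
        obtain ⟨x', hx'T, hx'T'⟩ := Set.exists_of_ssubset hT'
        have : (x' : V) ∈ (Subtype.val '' T') ∪ AllAdjSet G P i := hSsub hx'T
        rcases this with ⟨z', hz', hzz⟩ | hz
        · exact hx'T' ((Subtype.val_injective hzz) ▸ hz')
        · exact hz.1 x'.2
    have := hmin.2 _ hTbig
    have hAR : AvoidReach G ((Subtype.val '' T') ∪ AllAdjSet G P i) u v := by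
      by_contra hno
      refine this ⟨?_, ?_, hno⟩
      · rintro (⟨z', hz', hzz⟩ | hz)
        · exact hu (hzz ▸ hT'.1 hz')
        · exact hz.1 huP
      · rintro (⟨z', hz', hzz⟩ | hz)
        · exact hv (hzz ▸ hT'.1 hz')
        · exact hz.1 hvP
    obtain ⟨w, hw⟩ := hAR
    have hconf : ∀ z ∈ w.support, z ∈ P i := by
      refine walk_confine hmod w huP ?_
      intro z hz hzA
      exact hw z hz (Or.inr hzA)
    obtain ⟨W, hWsup⟩ := walk_to_induce w hconf
    refine hsep'.2.2 ⟨W.copy (by simp) (by simp), ?_⟩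
    intro z hz hzT'
    rw [SimpleGraph.Walk.support_copy] at hz
    exact hw z (hWsup z hz) (Or.inl ⟨z, hzT', rfl⟩)

end Classify
section FV

open Finset in
/-- Bound for the cardinality of a finite union of sets (finite ambient type). -/
lemma ncard_biUnion_le {α β : Type*} [Finite β] (t : Finset α) (f : α → Set β) :
    (⋃ i ∈ t, f i).ncard ≤ ∑ i ∈ t, (f i).ncard := by
  classical
  induction t using Finset.induction_on with
  | empty => simp
  | @insert a t ha ih =>
    rw [Finset.sum_insert ha, Finset.set_biUnion_insert]
    exact le_trans (Set.ncard_union_le _ _) (by omega)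

variable {ι : Type*}

/-- Pairwise connectivity within a set. -/
def PairConn (H : SimpleGraph ι) (C : Set ι) : Prop :=
  ∀ x ∈ C, ∀ y ∈ C, ∃ w : H.Walk x y, ∀ z ∈ w.support, z ∈ C

/-- The family of connected supersets of `R` avoiding `F`, with `a` extra vertices and
at most `s` neighbours outside `F`. -/
def CFam (H : SimpleGraph ι) (R F : Set ι) (a s : ℕ) : Set (Set ι) :=
  {C | R ⊆ C ∧ C ∩ F = ∅ ∧ PairConn H C ∧ C.ncard = R.ncard + a ∧
    ((setNbhd H C) \ F).ncard ≤ s}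

/-- A walk within `C` from `R` to the outside of `R` crosses the boundary of `R`. -/
lemma walk_cross {H : SimpleGraph ι} {R C : Set ι} :
    ∀ {x y : ι} (w : H.Walk x y), x ∈ R → y ∉ R → (∀ z ∈ w.support, z ∈ C) →
    ∃ q, q ∈ C ∧ q ∈ setNbhd H R := by
  intro x y w
  induction w with
  | nil => intro hx hy _; exact absurd hx hy
  | @cons x c y hadj p ih =>
    intro hx hy hsup
    by_cases hc : c ∈ R
    · exact ih hc hy (fun z hz => hsup z (by simp [hz]))
    · exact ⟨c, hsup c (by simp), hc, x, hx, hadj.symm⟩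

/-- The key branching bound on the number of connected sets. -/
lemma CFam_ncard_le [Finite ι] (H : SimpleGraph ι) :
    ∀ (n a s : ℕ), a + s ≤ n → ∀ (R F : Set ι), R.Nonempty →
      (CFam H R F a s).ncard ≤ (a + s).choose a := by
  intro n
  induction n with
  | zero =>
    intro a s han R F hR
    have ha : a = 0 := by omega
    subst ha
    have hsub : CFam H R F 0 s ⊆ {R} := by
      intro C hC
      have h4 := hC.2.2.2.1
      exact Set.mem_singleton_iff.2
        (Set.eq_of_subset_of_ncard_le hC.1 (by omega) (Set.toFinite _)).symm
    exact le_trans (Set.ncard_le_ncard hsub (Set.toFinite _)) (by simp)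
  | succ n ih =>
    intro a s han R F hR
    match a with
    | 0 =>
      have hsub : CFam H R F 0 s ⊆ {R} := by
        intro C hC
        have h4 := hC.2.2.2.1
        exact Set.mem_singleton_iff.2
          (Set.eq_of_subset_of_ncard_le hC.1 (by omega) (Set.toFinite _)).symm
      exact le_trans (Set.ncard_le_ncard hsub (Set.toFinite _)) (by simp)
    | a' + 1 =>
      by_cases hex : ∃ q, q ∈ setNbhd H R \ F
      · obtain ⟨q, hqN, hqF⟩ := hex
        have hqR : q ∉ R := hqN.1
        have hmem1 : ∀ C ∈ CFam H R F (a' + 1) s, q ∈ C →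
            C ∈ CFam H (insert q R) F a' s := by
          rintro C ⟨h1, h2, h3, h4, h5⟩ hqC
          refine ⟨Set.insert_subset hqC h1, h2, h3, ?_, h5⟩
          rw [Set.ncard_insert_of_notMem hqR (Set.toFinite _)]
          omega
        have hmem2 : ∀ C ∈ CFam H R F (a' + 1) s, q ∉ C → 1 ≤ s ∧
            C ∈ CFam H R (insert q F) (a' + 1) (s - 1) := by
          rintro C ⟨h1, h2, h3, h4, h5⟩ hqC
          have hqNC : q ∈ setNbhd H C \ F := by
            obtain ⟨p, hpR, hadj⟩ := hqN.2
            exact ⟨⟨hqC, p, h1 hpR, hadj⟩, hqF⟩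
          have hpos : 1 ≤ ((setNbhd H C) \ F).ncard :=
            (Set.ncard_pos (Set.toFinite _)).2 ⟨q, hqNC⟩
          refine ⟨by omega, h1, ?_, h3, h4, ?_⟩
          · rw [Set.inter_insert_of_notMem hqC]
            exact h2
          · have : (setNbhd H C) \ (insert q F) = ((setNbhd H C) \ F) \ {q} := by
              ext z
              simp only [Set.mem_diff, Set.mem_insert_iff, Set.mem_singleton_iff]
              tauto
            rw [this, Set.ncard_diff_singleton_of_mem hqNC]
            omega
        match s with
        | 0 =>
          have hsub : CFam H R F (a' + 1) 0 ⊆ CFam H (insert q R) F a' 0 := by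
            intro C hC
            by_cases hqC : q ∈ C
            · exact hmem1 C hC hqC
            · exact absurd (hmem2 C hC hqC).1 (by omega)
          calc (CFam H R F (a' + 1) 0).ncard
              ≤ (CFam H (insert q R) F a' 0).ncard :=
                Set.ncard_le_ncard hsub (Set.toFinite _)
            _ ≤ (a' + 0).choose a' := ih a' 0 (by omega) _ F ⟨q, Set.mem_insert q R⟩
            _ ≤ (a' + 1 + 0).choose (a' + 1) := by simp
        | s' + 1 =>
          have hsub : CFam H R F (a' + 1) (s' + 1) ⊆
              CFam H (insert q R) F a' (s' + 1) ∪ CFam H R (insert q F) (a' + 1) s' := by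
            intro C hC
            by_cases hqC : q ∈ C
            · exact Or.inl (hmem1 C hC hqC)
            · have := (hmem2 C hC hqC).2
              simpa using Or.inr this
          calc (CFam H R F (a' + 1) (s' + 1)).ncard
              ≤ _ := Set.ncard_le_ncard hsub (Set.toFinite _)
            _ ≤ (CFam H (insert q R) F a' (s' + 1)).ncard +
                (CFam H R (insert q F) (a' + 1) s').ncard := Set.ncard_union_le _ _
            _ ≤ (a' + (s' + 1)).choose a' + (a' + 1 + s').choose (a' + 1) := by
                gcongr
                · exact ih a' (s' + 1) (by omega) _ F ⟨q, Set.mem_insert q R⟩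
                · exact ih (a' + 1) s' (by omega) R _ hR
            _ = (a' + 1 + (s' + 1)).choose (a' + 1) := by
                have e1 : a' + 1 + (s' + 1) = (a' + (s' + 1)) + 1 := by omega
                have e2 : a' + 1 + s' = a' + (s' + 1) := by omega
                rw [e1, Nat.choose_succ_succ (a' + (s' + 1)) a', e2]
      · -- no available neighbour: the family is empty
        have : CFam H R F (a' + 1) s = ∅ := by
          ext C
          simp only [Set.mem_empty_iff_false, iff_false]
          rintro ⟨h1, h2, h3, h4, h5⟩
          have hCR : ∃ y ∈ C, y ∉ R := by
            by_contra hno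
            push_neg at hno
            have : C = R := Set.Subset.antisymm hno h1
            rw [this] at h4
            omega
          obtain ⟨y, hyC, hyR⟩ := hCR
          obtain ⟨r, hrR⟩ := hR
          obtain ⟨w, hw⟩ := h3 r (h1 hrR) y hyC
          obtain ⟨(q : ι), hqC, hqN⟩ := walk_cross w hrR hyR hw
          refine hex ⟨q, hqN, ?_⟩
          intro hqF
          have : q ∈ C ∩ F := ⟨hqC, hqF⟩
          rw [h2] at this
          exact this
        simp [this]

end FV
section FVCount

variable {ι : Type*}

lemma choose_le_fib : ∀ m k : ℕ, m.choose k ≤ Nat.fib (m + k + 1) := by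
  intro m
  induction m with
  | zero =>
    intro k
    cases k with
    | zero => simp
    | succ k =>
      simp only [Nat.choose]
      exact Nat.zero_le _
  | succ m ih =>
    intro k
    cases k with
    | zero =>
      simpa using Nat.succ_le_of_lt (Nat.fib_pos.2 (by omega))
    | succ k =>
      rw [Nat.choose_succ_succ]
      have h1 := ih k
      have h2 := ih (k + 1)
      have e1 : m + (k + 1) + 1 = m + k + 2 := by omega
      have e2 : m + 1 + (k + 1) + 1 = m + k + 3 := by omega
      have h3 : Nat.fib (m + k + 3) = Nat.fib (m + k + 1) + Nat.fib (m + k + 2) := by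
        have h := @Nat.fib_add_two (m + k + 1)
        have e3 : m + k + 1 + 2 = m + k + 3 := by omega
        have e4 : m + k + 1 + 1 = m + k + 2 := by omega
        rw [e3, e4] at h
        exact h
      rw [e1] at h2
      rw [e2, h3]
      simp only [Nat.succ_eq_add_one]
      omega

variable {H : SimpleGraph ι} {S : Set ι} {u v : ι}

/-- The reachable set from `u` avoiding a separator. -/
def reachSet (H : SimpleGraph ι) (S : Set ι) (u : ι) : Set ι := {x | AvoidReach H S u x}

lemma reachSet_self (hu : u ∉ S) : u ∈ reachSet H S u := avoidReach_refl hu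

lemma reachSet_disj_sep : reachSet H S u ∩ S = ∅ := by
  ext x
  simp only [Set.mem_inter_iff, Set.mem_empty_iff_false, iff_false, not_and]
  exact fun hx => hx.notMem_right

lemma IsMinSep.nbhd_reachSet (hmin : IsMinSep H S u v) : setNbhd H (reachSet H S u) = S := by
  ext x
  constructor
  · rintro ⟨hxC, a, haC, hadj⟩
    by_contra hxS
    exact hxC (haC.trans (avoidReach_of_adj hadj.symm haC.notMem_right hxS))
  · intro hxS
    obtain ⟨a, hax, hua⟩ := hmin.exists_nbr hxS
    refine ⟨fun hc => hc.notMem_right hxS, a, hua, hax.symm⟩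

lemma pairConn_reachSet : PairConn H (reachSet H S u) := by
  intro x hx y hy
  obtain ⟨wx, hwx⟩ := hx
  obtain ⟨wy, hwy⟩ := hy
  refine ⟨wx.reverse.append wy, ?_⟩
  intro z hz
  rw [SimpleGraph.Walk.support_append] at hz
  rcases List.mem_append.1 hz with hz | hz
  · rw [SimpleGraph.Walk.support_reverse, List.mem_reverse] at hz
    exact avoidReach_of_mem_support hwx hz
  · exact avoidReach_of_mem_support hwy (List.mem_of_mem_tail hz)

lemma IsMinSep.reachSet_disj (hmin : IsMinSep H S u v) :
    reachSet H S u ∩ reachSet H S v = ∅ := by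
  ext x
  simp only [Set.mem_inter_iff, Set.mem_empty_iff_false, iff_false, not_and]
  intro hx hy
  exact hmin.1.2.2 (hx.trans hy.symm)

/-- The family of candidate small components. -/
def DFam (H : SimpleGraph ι) (N : ℕ) : Set (Set ι) :=
  {C | C.Nonempty ∧ PairConn H C ∧ 2 * C.ncard + (setNbhd H C).ncard ≤ N}

lemma minsep_into_DFam [Fintype ι] (hS : IsMinimalSeparator H S) :
    ∃ C ∈ DFam H (Fintype.card ι), setNbhd H C = S := by
  obtain ⟨u, v, hmin⟩ := hS
  have hu : u ∉ S := hmin.1.1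
  have hv : v ∉ S := hmin.1.2.1
  have hd1 : reachSet H S u ∩ reachSet H S v = ∅ := hmin.reachSet_disj
  have hcard : (reachSet H S u).ncard + (reachSet H S v).ncard + S.ncard ≤ Fintype.card ι := by
    have h1 : ((reachSet H S u ∪ reachSet H S v) ∪ S).ncard ≤ Fintype.card ι := by
      have h := Set.ncard_le_ncard
        (Set.subset_univ ((reachSet H S u ∪ reachSet H S v) ∪ S)) (Set.toFinite _)
      rwa [Set.ncard_univ, Nat.card_eq_fintype_card] at h
    rw [Set.ncard_union_eq ?d1 (Set.toFinite _) (Set.toFinite _),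
        Set.ncard_union_eq ?d2 (Set.toFinite _) (Set.toFinite _)] at h1
    · exact h1
    case d2 => exact Set.disjoint_iff_inter_eq_empty.2 hd1
    case d1 =>
      rw [Set.disjoint_union_left]
      constructor
      · exact Set.disjoint_iff_inter_eq_empty.2 reachSet_disj_sep
      · exact Set.disjoint_iff_inter_eq_empty.2 reachSet_disj_sep
  by_cases hle : (reachSet H S u).ncard ≤ (reachSet H S v).ncard
  · refine ⟨reachSet H S u, ⟨⟨u, reachSet_self hu⟩, pairConn_reachSet, ?_⟩,
      hmin.nbhd_reachSet⟩
    rw [hmin.nbhd_reachSet]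
    omega
  · refine ⟨reachSet H S v, ⟨⟨v, reachSet_self hv⟩, pairConn_reachSet, ?_⟩,
      hmin.symm.nbhd_reachSet⟩
    rw [hmin.symm.nbhd_reachSet]
    omega

/-- Fomin–Villanger: combinatorial bound on the number of minimal separators. -/
theorem fv_count [Fintype ι] (H : SimpleGraph ι) :
    {S : Set ι | IsMinimalSeparator H S}.ncard ≤
      Fintype.card ι * ((Fintype.card ι + 1) * (Fintype.card ι + 1) *
        Nat.fib (Fintype.card ι + 1)) := by
  classical
  set N := Fintype.card ι with hN
  -- step 1: inject into DFam via the neighbourhood map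
  have step1 : {S : Set ι | IsMinimalSeparator H S}.ncard ≤ (DFam H N).ncard := by
    refine Set.ncard_le_ncard_of_injOn (fun S =>
      if h : IsMinimalSeparator H S then (minsep_into_DFam h).choose else ∅) ?_ ?_
      (Set.toFinite _)
    · intro S hS
      simp only [Set.mem_setOf_eq] at hS
      simp only [dif_pos hS]
      exact (minsep_into_DFam hS).choose_spec.1
    · intro S hS S' hS' hff
      simp only [Set.mem_setOf_eq] at hS hS'
      simp only [dif_pos hS, dif_pos hS'] at hff
      rw [← (minsep_into_DFam hS).choose_spec.2, ← (minsep_into_DFam hS').choose_spec.2, hff]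
  -- step 2: cover DFam by rooted families
  have step2 : (DFam H N).ncard ≤
      ∑ r : ι, ((N + 1) * (N + 1) * Nat.fib (N + 1)) := by
    have hcov : DFam H N ⊆ ⋃ r ∈ (Finset.univ : Finset ι), {C ∈ DFam H N | r ∈ C} := by
      intro C hC
      obtain ⟨x, hx⟩ := hC.1
      exact Set.mem_biUnion (Finset.mem_univ x) ⟨hC, hx⟩
    refine le_trans (le_trans (Set.ncard_le_ncard hcov (Set.toFinite _))
      (ncard_biUnion_le _ _)) (Finset.sum_le_sum ?_)
    intro r _
    -- rooted family is covered by the CFam families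
    set pairs : Finset (ℕ × ℕ) :=
      (Finset.range (N + 1) ×ˢ Finset.range (N + 1)).filter
        (fun p => 2 * (p.1 + 1) + p.2 ≤ N) with hpairs
    have hcov2 : {C ∈ DFam H N | r ∈ C} ⊆ ⋃ p ∈ pairs, CFam H {r} ∅ p.1 p.2 := by
      rintro C ⟨⟨hne, hconn, hsize⟩, hrC⟩
      have hCpos : 1 ≤ C.ncard := (Set.ncard_pos (Set.toFinite _)).2 ⟨r, hrC⟩
      have hCle : C.ncard ≤ N := by
        have h := Set.ncard_le_ncard (Set.subset_univ C) (Set.toFinite _)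
        rwa [Set.ncard_univ, Nat.card_eq_fintype_card] at h
      have hsle : (setNbhd H C).ncard ≤ N := by omega
      refine Set.mem_biUnion (x := (C.ncard - 1, (setNbhd H C).ncard)) ?_ ?_
      · show (C.ncard - 1, (setNbhd H C).ncard) ∈ pairs
        rw [hpairs]
        exact Finset.mem_filter.mpr ⟨Finset.mem_product.mpr
          ⟨Finset.mem_range.mpr (by omega), Finset.mem_range.mpr (by omega)⟩, by omega⟩
      · refine ⟨Set.singleton_subset_iff.2 hrC, by simp, hconn, ?_, by simp⟩
        rw [Set.ncard_singleton]
        omega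
    refine le_trans (le_trans (Set.ncard_le_ncard hcov2 (Set.toFinite _))
      (ncard_biUnion_le _ _)) ?_
    have hbound : ∀ p ∈ pairs, (CFam H {r} ∅ p.1 p.2).ncard ≤ Nat.fib (N + 1) := by
      intro p hp
      rw [hpairs] at hp
      simp only [Finset.mem_filter, Finset.mem_product, Finset.mem_range] at hp
      refine le_trans (CFam_ncard_le H (p.1 + p.2) p.1 p.2 le_rfl {r} ∅
        ⟨r, rfl⟩) (le_trans (choose_le_fib _ _) (Nat.fib_mono (by omega)))
    refine le_trans (Finset.sum_le_sum hbound) ?_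
    rw [Finset.sum_const, smul_eq_mul]
    have : pairs.card ≤ (N + 1) * (N + 1) := by
      rw [hpairs]
      exact le_trans (Finset.card_filter_le _ _) (by simp [Finset.card_product])
    exact Nat.mul_le_mul_right _ this
  rw [Finset.sum_const, smul_eq_mul, Finset.card_univ] at step2
  exact le_trans step1 step2

end FVCount
section Analysis

open Filter

lemma fib_le_pow : ∀ n : ℕ, (Nat.fib (n + 1) : ℝ) ≤ (1.618034 : ℝ) ^ n := by
  intro n
  induction n using Nat.strong_induction_on with
  | _ n ih =>
    match n with
    | 0 => simp
    | 1 =>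
      rw [show (1 + 1 : ℕ) = 2 from rfl, Nat.fib_two]
      norm_num
    | (m + 2) =>
      have h1 := ih m (by omega)
      have h2 := ih (m + 1) (by omega)
      have hfib : Nat.fib (m + 2 + 1) = Nat.fib (m + 1) + Nat.fib (m + 1 + 1) := by
        have h := @Nat.fib_add_two (m + 1)
        have e3 : m + 1 + 2 = m + 2 + 1 := by omega
        rw [e3] at h
        exact h
      rw [hfib]
      push_cast
      have hpow : (0 : ℝ) < (1.618034 : ℝ) ^ m := by positivity
      have hq : (1.618034 : ℝ) ^ m + (1.618034 : ℝ) ^ (m + 1) ≤ (1.618034 : ℝ) ^ (m + 2) := by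
        have e1 : (1.618034 : ℝ) ^ (m + 1) = (1.618034 : ℝ) ^ m * 1.618034 := by ring
        have e2 : (1.618034 : ℝ) ^ (m + 2) = (1.618034 : ℝ) ^ m * (1.618034 * 1.618034) := by
          ring
        rw [e1, e2]
        nlinarith [hpow]
      linarith

lemma exists_poly_const : ∃ c : ℝ, 0 < c ∧ ∀ n : ℕ,
    ((n : ℝ) + 1) ^ 3 * (1.618034 : ℝ) ^ n ≤ c * (1.6181 : ℝ) ^ n := by
  set r : ℝ := 1.618034 / 1.6181 with hr
  have hr0 : (0 : ℝ) ≤ r := by rw [hr]; norm_num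
  have hr1 : r < 1 := by rw [hr]; norm_num
  have h0 : Tendsto (fun n : ℕ => (n : ℝ) ^ 3 * r ^ n) atTop (nhds 0) :=
    tendsto_pow_const_mul_const_pow_of_lt_one 3 hr0 hr1
  have h1 : Tendsto (fun n : ℕ => (((n + 1 : ℕ)) : ℝ) ^ 3 * r ^ (n + 1)) atTop (nhds 0) :=
    h0.comp (tendsto_add_atTop_nat 1)
  have hrne : r ≠ 0 := by rw [hr]; norm_num
  have h2 : Tendsto (fun n : ℕ => ((n : ℝ) + 1) ^ 3 * r ^ n) atTop (nhds 0) := by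
    have h3 := h1.div_const r
    have heq : (fun n : ℕ => (((n + 1 : ℕ)) : ℝ) ^ 3 * r ^ (n + 1) / r) =
        (fun n : ℕ => ((n : ℝ) + 1) ^ 3 * r ^ n) := by
      funext n
      push_cast
      field_simp
      ring
    rw [heq] at h3
    simpa using h3
  have hev : ∀ᶠ n : ℕ in atTop, ((n : ℝ) + 1) ^ 3 * r ^ n < 1 :=
    h2.eventually (gt_mem_nhds one_pos)
  obtain ⟨N, hN⟩ := eventually_atTop.1 hev
  set c : ℝ := (∑ i ∈ Finset.range N, ((i : ℝ) + 1) ^ 3 * r ^ i) + 1 with hc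
  have hterm : ∀ i : ℕ, (0 : ℝ) ≤ ((i : ℝ) + 1) ^ 3 * r ^ i := by
    intro i
    positivity
  have hc1 : (1 : ℝ) ≤ c := by
    rw [hc]
    have : (0 : ℝ) ≤ ∑ i ∈ Finset.range N, ((i : ℝ) + 1) ^ 3 * r ^ i :=
      Finset.sum_nonneg (fun i _ => hterm i)
    linarith
  have hfc : ∀ n : ℕ, ((n : ℝ) + 1) ^ 3 * r ^ n ≤ c := by
    intro n
    by_cases hn : N ≤ n
    · linarith [hN n hn]
    · push_neg at hn
      have hmem : n ∈ Finset.range N := Finset.mem_range.2 hn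
      have h5 := Finset.single_le_sum (f := fun i : ℕ => ((i : ℝ) + 1) ^ 3 * r ^ i)
        (fun i _ => hterm i) hmem
      rw [hc]
      linarith
  refine ⟨c, by linarith, ?_⟩
  intro n
  have hBpos : (0 : ℝ) < (1.6181 : ℝ) ^ n := by positivity
  have hkey : ((n : ℝ) + 1) ^ 3 * (1.618034 : ℝ) ^ n =
      (((n : ℝ) + 1) ^ 3 * r ^ n) * (1.6181 : ℝ) ^ n := by
    rw [hr, div_pow]
    field_simp
  rw [hkey]
  exact mul_le_mul_of_nonneg_right (hfc n) (le_of_lt hBpos)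

/-- Real form of the Fomin–Villanger bound. -/
theorem fv_real : ∃ c : ℝ, 0 < c ∧ ∀ (ι : Type) [Fintype ι] (H : SimpleGraph ι),
    ({S : Set ι | IsMinimalSeparator H S}.ncard : ℝ) ≤ c * (1.6181 : ℝ) ^ Fintype.card ι := by
  obtain ⟨c, hc, hbound⟩ := exists_poly_const
  refine ⟨c, hc, ?_⟩
  intro ι _ H
  have h1 := fv_count H
  set N := Fintype.card ι with hN
  have h2 : ({S : Set ι | IsMinimalSeparator H S}.ncard : ℝ) ≤
      (N : ℝ) * (((N : ℝ) + 1) * ((N : ℝ) + 1) * (Nat.fib (N + 1) : ℝ)) := by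
    calc ({S : Set ι | IsMinimalSeparator H S}.ncard : ℝ)
        ≤ ((N * ((N + 1) * (N + 1) * Nat.fib (N + 1)) : ℕ) : ℝ) := by exact_mod_cast h1
      _ = (N : ℝ) * (((N : ℝ) + 1) * ((N : ℝ) + 1) * (Nat.fib (N + 1) : ℝ)) := by push_cast; ring
  have h3 : (N : ℝ) * (((N : ℝ) + 1) * ((N : ℝ) + 1) * (Nat.fib (N + 1) : ℝ)) ≤
      ((N : ℝ) + 1) ^ 3 * (1.618034 : ℝ) ^ N := by
    have hfib := fib_le_pow N
    have hNpos : (0 : ℝ) ≤ (N : ℝ) := Nat.cast_nonneg N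
    have hfibpos : (0 : ℝ) ≤ (Nat.fib (N + 1) : ℝ) := Nat.cast_nonneg _
    calc (N : ℝ) * (((N : ℝ) + 1) * ((N : ℝ) + 1) * (Nat.fib (N + 1) : ℝ))
        ≤ ((N : ℝ) + 1) * (((N : ℝ) + 1) * ((N : ℝ) + 1) * (Nat.fib (N + 1) : ℝ)) := by
          have hnn : (0 : ℝ) ≤ ((N : ℝ) + 1) * ((N : ℝ) + 1) * (Nat.fib (N + 1) : ℝ) := by
            positivity
          nlinarith
      _ = ((N : ℝ) + 1) ^ 3 * (Nat.fib (N + 1) : ℝ) := by ring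
      _ ≤ ((N : ℝ) + 1) ^ 3 * (1.618034 : ℝ) ^ N :=
          mul_le_mul_of_nonneg_left hfib (by positivity)
  exact le_trans h2 (le_trans h3 (hbound N))

end Analysis
section Count

variable {V : Type u} {ι : Type w} {G : SimpleGraph V} {P : ι → Set V}

lemma NE_finite [Finite V] (hpart : ∀ x : V, ∃! i, x ∈ P i) :
    {i | (P i).Nonempty}.Finite := by
  have hinj : Set.InjOn P {i | (P i).Nonempty} := by
    intro i hi j hj hij
    obtain ⟨x, hx⟩ := hi
    exact parts_disj hpart hx (hij ▸ hx)
  exact Set.Finite.of_finite_image (Set.toFinite _) hinj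

lemma msep_subsingleton (h : Subsingleton V) :
    {S : Set V | IsMinimalSeparator G S} = ∅ := by
  ext S
  simp only [Set.mem_setOf_eq, Set.mem_empty_iff_false, iff_false]
  rintro ⟨u, v, hmin⟩
  exact hmin.ne (Subsingleton.elim u v)

lemma msepQ_nonempty_parts {J : Set ι} (hJ : J ∈ MsepQ G P) :
    ∃ a b : ι, a ≠ b ∧ (P a).Nonempty ∧ (P b).Nonempty := by
  obtain ⟨a, b, hmin, ha, hb, _⟩ := hJ
  exact ⟨a, b, hmin.ne, ha, hb⟩

lemma msepQ_disjUnion (hcross : ∀ i j, i ≠ j → ∀ x ∈ P i, ∀ y ∈ P j, ¬ G.Adj x y) :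
    MsepQ G P ⊆ {∅} := by
  rintro J ⟨a, b, hmin, _, _, _⟩
  rw [Set.mem_singleton_iff]
  by_contra hne
  obtain ⟨j, hj⟩ := Set.nonempty_iff_ne_empty.2 hne
  obtain ⟨x, hadjx, _⟩ := hmin.exists_nbr hj
  obtain ⟨hxj, x₀, hx₀, y₀, hy₀, hGxy⟩ := hadjx
  exact hcross x j hxj x₀ hx₀ y₀ hy₀ hGxy

lemma msepQ_join (hcross : ∀ i j, i ≠ j → ∀ x ∈ P i, ∀ y ∈ P j, G.Adj x y) :
    MsepQ G P = ∅ := by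
  ext J
  simp only [Set.mem_empty_iff_false, iff_false]
  rintro ⟨a, b, hmin, ⟨xa, hxa⟩, ⟨xb, hxb⟩, _⟩
  have hne := hmin.ne
  have hadj : (quotG G P).Adj a b := ⟨hne, xa, hxa, xb, hxb, hcross a b hne xa hxa xb hxb⟩
  exact hmin.1.2.2 (avoidReach_of_adj hadj hmin.1.1 hmin.1.2.1)

lemma partition_count [Fintype V] (hpart : ∀ x : V, ∃! i, x ∈ P i)
    (hmod : ∀ i, ∀ x : V, x ∉ P i →
      (∀ y ∈ P i, G.Adj x y) ∨ (∀ y ∈ P i, ¬ G.Adj x y))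
    (hQfin : (MsepQ G P).Finite) :
    {S : Set V | IsMinimalSeparator G S}.ncard ≤
      (∑ i ∈ (NE_finite hpart).toFinset,
        {T : Set (P i) | IsMinimalSeparator (SimpleGraph.induce (P i) G) T}.ncard)
      + (MsepQ G P).ncard := by
  classical
  have hcov : {S : Set V | IsMinimalSeparator G S} ⊆
      (⋃ i ∈ (NE_finite hpart).toFinset,
        (LiftSep G P i) '' {T | IsMinimalSeparator (SimpleGraph.induce (P i) G) T})
      ∪ ((fun J => {z | pidx hpart z ∈ J}) '' MsepQ G P) := by
    intro S hS
    rcases classify_minsep hpart hmod hS with ⟨i, T, hT, hne, hErfl⟩ | ⟨hJ, hSrfl⟩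
    · exact Or.inl (Set.mem_biUnion ((NE_finite hpart).mem_toFinset.2 hne) ⟨T, hT, hErfl.symm⟩)
    · exact Or.inr ⟨JSet P S, hJ, hSrfl.symm⟩
  calc {S : Set V | IsMinimalSeparator G S}.ncard
      ≤ _ := Set.ncard_le_ncard hcov (Set.toFinite _)
    _ ≤ (⋃ i ∈ (NE_finite hpart).toFinset,
          (LiftSep G P i) '' {T | IsMinimalSeparator (SimpleGraph.induce (P i) G) T}).ncard
        + ((fun J => {z | pidx hpart z ∈ J}) '' MsepQ G P).ncard := Set.ncard_union_le _ _
    _ ≤ _ := by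
        gcongr
        · exact le_trans (ncard_biUnion_le _ _) (Finset.sum_le_sum
            (fun i _ => Set.ncard_image_le (Set.toFinite _)))
        · exact Set.ncard_image_le hQfin

lemma partition_ncard [Fintype V] (hpart : ∀ x : V, ∃! i, x ∈ P i) :
    ∑ i ∈ (NE_finite hpart).toFinset, (P i).ncard = Fintype.card V := by
  classical
  have hU : (Finset.univ : Finset V) =
      (NE_finite hpart).toFinset.biUnion (fun i => (P i).toFinite.toFinset) := by
    ext x
    simp only [Finset.mem_univ, true_iff, Finset.mem_biUnion, Set.Finite.mem_toFinset,
      Set.mem_setOf_eq]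
    exact ⟨pidx hpart x, ⟨x, mem_pidx hpart x⟩, mem_pidx hpart x⟩
  have hdisj : ∀ i ∈ (NE_finite hpart).toFinset, ∀ j ∈ (NE_finite hpart).toFinset,
      i ≠ j → Disjoint ((P i).toFinite.toFinset) ((P j).toFinite.toFinset) := by
    intro i _ j _ hij
    rw [Finset.disjoint_left]
    intro x hxi hxj
    rw [Set.Finite.mem_toFinset] at hxi hxj
    exact hij (parts_disj hpart hxi hxj)
  rw [← Finset.card_univ, hU, Finset.card_biUnion hdisj]
  exact Finset.sum_congr rfl (fun i _ => Set.ncard_eq_toFinset_card _ _)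

end Count
section Main

lemma mwle_card (V : Type) [Fintype V] (G : SimpleGraph V) : MWLE (Fintype.card V) V G := by
  classical
  let e := Fintype.equivFin V
  refine MWLE.modules V G (Fintype.card V) le_rfl (fun i => {e.symm i}) ?_ ?_ ?_
  · intro x
    refine ⟨e x, by simp, ?_⟩
    intro j hj
    simp only [Set.mem_singleton_iff] at hj
    have : e x = j := by rw [hj]; simp
    exact this.symm
  · intro i
    haveI hss : Subsingleton (({e.symm i} : Set V) : Type) :=
      ⟨fun a b => Subtype.ext (by
        have ha := a.2
        have hb := b.2
        simp only [Set.mem_singleton_iff] at ha hb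
        rw [ha, hb])⟩
    exact MWLE.base _ _ hss
  · intro i x _
    by_cases h : G.Adj x (e.symm i)
    · left
      intro y hy
      rw [Set.mem_singleton_iff] at hy
      rw [hy]
      exact h
    · right
      intro y hy
      rw [Set.mem_singleton_iff] at hy
      rw [hy]
      exact h

lemma main_step {V ι : Type} {G : SimpleGraph V} {P : ι → Set V}
    [Fintype V] (A : ℝ) (hA1 : 1 ≤ A) (k : ℕ)
    (hpart : ∀ x : V, ∃! i, x ∈ P i)
    (hmod : ∀ i, ∀ x : V, x ∉ P i →
      (∀ y ∈ P i, G.Adj x y) ∨ (∀ y ∈ P i, ¬ G.Adj x y))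
    (hQfin : (MsepQ G P).Finite)
    (hQbound : ((MsepQ G P).ncard : ℝ) ≤ A * (1.6181 : ℝ) ^ k)
    (ih : ∀ i, (P i).Nonempty →
      ({T : Set (P i) | IsMinimalSeparator (SimpleGraph.induce (P i) G) T}.ncard : ℝ) ≤
        A * (2 * ((P i).ncard : ℝ) - 1) * (1.6181 : ℝ) ^ k)
    (hcard : 1 ≤ Fintype.card V) :
    ({S : Set V | IsMinimalSeparator G S}.ncard : ℝ) ≤
      A * (2 * (Fintype.card V : ℝ) - 1) * (1.6181 : ℝ) ^ k := by
  classical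
  set Ifin := (NE_finite hpart).toFinset with hIfin
  set m := Ifin.card with hm
  have hBpos : (0 : ℝ) < (1.6181 : ℝ) ^ k := by positivity
  have hB1 : (1 : ℝ) ≤ (1.6181 : ℝ) ^ k := one_le_pow₀ (by norm_num)
  -- at least one nonempty part
  have hm1 : 1 ≤ m := by
    have hpos : 0 < Fintype.card V := hcard
    have hne : Nonempty V := Fintype.card_pos_iff.1 hpos
    obtain ⟨x⟩ := hne
    have : pidx hpart x ∈ Ifin := by
      rw [hIfin, Set.Finite.mem_toFinset]
      exact ⟨x, mem_pidx hpart x⟩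
    rw [hm]
    exact Finset.card_pos.2 ⟨_, this⟩
  -- the counting inequality, over the reals
  have hcount := partition_count hpart hmod hQfin
  have hcountR : ({S : Set V | IsMinimalSeparator G S}.ncard : ℝ) ≤
      (∑ i ∈ Ifin,
        ({T : Set (P i) | IsMinimalSeparator (SimpleGraph.induce (P i) G) T}.ncard : ℝ))
      + ((MsepQ G P).ncard : ℝ) := by
    rw [← Nat.cast_sum]
    exact_mod_cast hcount
  -- bound the sum using the inductive hypothesis
  have hsum : (∑ i ∈ Ifin,
      ({T : Set (P i) | IsMinimalSeparator (SimpleGraph.induce (P i) G) T}.ncard : ℝ)) ≤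
      A * (1.6181 : ℝ) ^ k * (2 * (Fintype.card V : ℝ) - m) := by
    have h1 : ∀ i ∈ Ifin,
        ({T : Set (P i) | IsMinimalSeparator (SimpleGraph.induce (P i) G) T}.ncard : ℝ) ≤
        A * (1.6181 : ℝ) ^ k * (2 * ((P i).ncard : ℝ) - 1) := by
      intro i hi
      have hne : (P i).Nonempty := by
        rw [hIfin, Set.Finite.mem_toFinset] at hi
        exact hi
      have := ih i hne
      linarith [this]
    refine le_trans (Finset.sum_le_sum h1) ?_
    rw [← Finset.mul_sum]
    have h2 : ∑ i ∈ Ifin, (2 * ((P i).ncard : ℝ) - 1) =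
        2 * (Fintype.card V : ℝ) - m := by
      rw [Finset.sum_sub_distrib, ← Finset.mul_sum, Finset.sum_const, ← Nat.cast_sum]
      rw [partition_ncard hpart]
      simp [hm]
    rw [h2]
  -- nonempty quotient separator family forces two nonempty parts
  have hm2 : (MsepQ G P).Nonempty → 2 ≤ m := by
    rintro ⟨J, hJ⟩
    obtain ⟨a, b, hab, ha, hb⟩ := msepQ_nonempty_parts hJ
    have haI : a ∈ Ifin := by rw [hIfin, Set.Finite.mem_toFinset]; exact ha
    have hbI : b ∈ Ifin := by rw [hIfin, Set.Finite.mem_toFinset]; exact hb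
    have : ({a, b} : Finset ι).card = 2 := Finset.card_pair hab
    rw [hm, ← this]
    exact Finset.card_le_card (by
      intro z hz
      rcases Finset.mem_insert.1 hz with rfl | hz
      · exact haI
      · rw [Finset.mem_singleton.1 hz]
        exact hbI)
  have hn1 : (1 : ℝ) ≤ (Fintype.card V : ℝ) := by exact_mod_cast hcard
  have hABnn : (0 : ℝ) ≤ A * (1.6181 : ℝ) ^ k := mul_nonneg (by linarith) (le_of_lt hBpos)
  have hfinal : A * (1.6181 : ℝ) ^ k * (2 * (Fintype.card V : ℝ) - 1) =
      A * (2 * (Fintype.card V : ℝ) - 1) * (1.6181 : ℝ) ^ k := by ring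
  by_cases hQ : (MsepQ G P) = ∅
  · have hQ0 : ((MsepQ G P).ncard : ℝ) = 0 := by rw [hQ]; simp
    rw [hQ0, add_zero] at hcountR
    have hmR : (1 : ℝ) ≤ (m : ℝ) := by exact_mod_cast hm1
    have hstep : A * (1.6181 : ℝ) ^ k * (2 * (Fintype.card V : ℝ) - m) ≤
        A * (1.6181 : ℝ) ^ k * (2 * (Fintype.card V : ℝ) - 1) := by
      apply mul_le_mul_of_nonneg_left _ hABnn
      linarith
    linarith
  · have h2m := hm2 (Set.nonempty_iff_ne_empty.2 hQ)
    have hmR : (2 : ℝ) ≤ (m : ℝ) := by exact_mod_cast h2m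
    have hstep : A * (1.6181 : ℝ) ^ k * (2 * (Fintype.card V : ℝ) - m) + A * (1.6181 : ℝ) ^ k ≤
        A * (1.6181 : ℝ) ^ k * (2 * (Fintype.card V : ℝ) - 1) := by
      nlinarith [hABnn, hmR]
    linarith

end Main
section KeyInduction

theorem key_bound (A : ℝ) (hA1 : 1 ≤ A)
    (hFV : ∀ (κ : Type) [Fintype κ] (H : SimpleGraph κ),
      ({S : Set κ | IsMinimalSeparator H S}.ncard : ℝ) ≤ A * (1.6181 : ℝ) ^ Fintype.card κ) :
    ∀ {k : ℕ} {V : Type} {G : SimpleGraph V}, MWLE k V G → ∀ (inst : Fintype V),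
      1 ≤ Fintype.card V →
      ({S : Set V | IsMinimalSeparator G S}.ncard : ℝ) ≤
        A * (2 * (Fintype.card V : ℝ) - 1) * (1.6181 : ℝ) ^ k := by
  intro k V G h
  induction h with
  | base W Gw hss =>
    intro inst hcard
    rw [msep_subsingleton hss]
    have hn1 : (1 : ℝ) ≤ (Fintype.card W : ℝ) := by exact_mod_cast hcard
    have hB : (0 : ℝ) < (1.6181 : ℝ) ^ k := by positivity
    simp only [Set.ncard_empty, Nat.cast_zero]
    have h0A : (0 : ℝ) ≤ A := by linarith
    have h2n : (0 : ℝ) ≤ 2 * (Fintype.card W : ℝ) - 1 := by linarith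
    exact mul_nonneg (mul_nonneg h0A h2n) (le_of_lt hB)
  | disjUnion W Gw ι P hpart hrec hcross ih =>
    intro inst hcard
    classical
    have hmod : ∀ i, ∀ x : W, x ∉ P i →
        (∀ y ∈ P i, Gw.Adj x y) ∨ (∀ y ∈ P i, ¬ Gw.Adj x y) := by
      intro i x hx
      right
      intro y hy hadj
      have hne : pidx hpart x ≠ i := fun hc => hx (hc ▸ mem_pidx hpart x)
      exact hcross (pidx hpart x) i hne x (mem_pidx hpart x) y hy hadj
    have hQfin : (MsepQ Gw P).Finite :=
      Set.Finite.subset (Set.finite_singleton ∅) (msepQ_disjUnion hcross)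
    have hB1 : (1 : ℝ) ≤ (1.6181 : ℝ) ^ k := one_le_pow₀ (by norm_num)
    have hQbound : ((MsepQ Gw P).ncard : ℝ) ≤ A * (1.6181 : ℝ) ^ k := by
      have h1 : (MsepQ Gw P).ncard ≤ 1 := by
        have := Set.ncard_le_ncard (msepQ_disjUnion hcross) (Set.finite_singleton ∅)
        simpa using this
      have h2 : ((MsepQ Gw P).ncard : ℝ) ≤ 1 := by exact_mod_cast h1
      nlinarith
    refine main_step A hA1 k hpart hmod hQfin hQbound ?_ hcard
    intro i hne
    haveI : Fintype (P i) := (Set.toFinite (P i)).fintype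
    have hci : 1 ≤ Fintype.card (P i) := Fintype.card_pos_iff.2 (hne.to_subtype)
    have hni : (P i).ncard = Fintype.card (P i) := by
      rw [← Nat.card_coe_set_eq, Nat.card_eq_fintype_card]
    rw [hni]
    exact ih i _ hci
  | join W Gw ι P hpart hrec hcross ih =>
    intro inst hcard
    classical
    have hmod : ∀ i, ∀ x : W, x ∉ P i →
        (∀ y ∈ P i, Gw.Adj x y) ∨ (∀ y ∈ P i, ¬ Gw.Adj x y) := by
      intro i x hx
      left
      intro y hy
      have hne : pidx hpart x ≠ i := fun hc => hx (hc ▸ mem_pidx hpart x)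
      exact hcross (pidx hpart x) i hne x (mem_pidx hpart x) y hy
    have hQempty := msepQ_join hcross
    have hQfin : (MsepQ Gw P).Finite := by rw [hQempty]; exact Set.finite_empty
    have hQbound : ((MsepQ Gw P).ncard : ℝ) ≤ A * (1.6181 : ℝ) ^ k := by
      rw [hQempty]
      have hB1 : (1 : ℝ) ≤ (1.6181 : ℝ) ^ k := one_le_pow₀ (by norm_num)
      simp only [Set.ncard_empty, Nat.cast_zero]
      nlinarith
    refine main_step A hA1 k hpart hmod hQfin hQbound ?_ hcard
    intro i hne
    haveI : Fintype (P i) := (Set.toFinite (P i)).fintype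
    have hci : 1 ≤ Fintype.card (P i) := Fintype.card_pos_iff.2 (hne.to_subtype)
    have hni : (P i).ncard = Fintype.card (P i) := by
      rw [← Nat.card_coe_set_eq, Nat.card_eq_fintype_card]
    rw [hni]
    exact ih i _ hci
  | modules W Gw p hp P hpart hrec hmod ih =>
    intro inst hcard
    classical
    have hQfin : (MsepQ Gw P).Finite := Set.toFinite _
    have hQbound : ((MsepQ Gw P).ncard : ℝ) ≤ A * (1.6181 : ℝ) ^ k := by
      have hsub : MsepQ Gw P ⊆ {J : Set (Fin p) | IsMinimalSeparator (quotG Gw P) J} := by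
        rintro J ⟨a, b, hmin, _, _, _⟩
        exact ⟨a, b, hmin⟩
      have h1 : (MsepQ Gw P).ncard ≤
          {J : Set (Fin p) | IsMinimalSeparator (quotG Gw P) J}.ncard :=
        Set.ncard_le_ncard hsub (Set.toFinite _)
      have h2 := hFV (Fin p) (quotG Gw P)
      rw [Fintype.card_fin] at h2
      have h3 : (1.6181 : ℝ) ^ p ≤ (1.6181 : ℝ) ^ k :=
        pow_le_pow_right₀ (by norm_num) hp
      have h4 : ((MsepQ Gw P).ncard : ℝ) ≤
          ({J : Set (Fin p) | IsMinimalSeparator (quotG Gw P) J}.ncard : ℝ) := by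
        exact_mod_cast h1
      nlinarith [h4, h2, h3, hA1]
    refine main_step A hA1 k hpart hmod hQfin hQbound ?_ hcard
    intro i hne
    haveI : Fintype (P i) := (Set.toFinite (P i)).fintype
    have hci : 1 ≤ Fintype.card (P i) := Fintype.card_pos_iff.2 (hne.to_subtype)
    have hni : (P i).ncard = Fintype.card (P i) := by
      rw [← Nat.card_coe_set_eq, Nat.card_eq_fintype_card]
    rw [hni]
    exact ih i _ hci

end KeyInduction

theorem statement_15 : ∃ c : ℝ, 0 < c ∧
    ∀ (V : Type) [Fintype V] (G : SimpleGraph V), 1 ≤ Fintype.card V →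
      ({S : Set V | IsMinimalSeparator G S}.ncard : ℝ) ≤
        c * (Fintype.card V : ℝ) * 1.6181 ^ mwNum G := by
  obtain ⟨cF, hcF, hFV⟩ := fv_real
  set A : ℝ := max cF 1 with hA
  have hA1 : 1 ≤ A := le_max_right _ _
  have hFV' : ∀ (κ : Type) [Fintype κ] (H : SimpleGraph κ),
      ({S : Set κ | IsMinimalSeparator H S}.ncard : ℝ) ≤ A * (1.6181 : ℝ) ^ Fintype.card κ := by
    intro κ _ H
    refine le_trans (hFV κ H) ?_
    have : (0 : ℝ) ≤ (1.6181 : ℝ) ^ Fintype.card κ := by positivity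
    exact mul_le_mul_of_nonneg_right (le_max_left _ _) this
  refine ⟨2 * A, by linarith, ?_⟩
  intro V inst G hcard
  have hmem : MWLE (mwNum G) V G := by
    have hne : {k | MWLE k V G}.Nonempty := ⟨Fintype.card V, mwle_card V G⟩
    exact Nat.sInf_mem hne
  have hkey := key_bound A hA1 hFV' hmem inst hcard
  have hn1 : (1 : ℝ) ≤ (Fintype.card V : ℝ) := by exact_mod_cast hcard
  have hB : (0 : ℝ) < (1.6181 : ℝ) ^ mwNum G := by positivity
  nlinarith [hkey, hn1, hB, hA1]
end

section
/- For all integers p ≥ 1 and q ≥ 1, in the graph W_{p,q} every set obtained by choosing exactly one vertex from each of the p paths is a minimal u,v-separator; consequently W_{p,q} has at least q^p minimal u,v-separators. -/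
open SimpleGraph

universe u

/-- The watermelon graph `W_{p,q}`: `p` pairwise disjoint paths, each on `q` vertices
(vertex `(i, a)` is the `a`-th vertex of the `i`-th path), together with `u = inr 0`
adjacent to the first vertex of every path and `v = inr 1` adjacent to the last vertex
of every path, and no other edges. -/
def watermelon (p q : ℕ) : SimpleGraph (Fin p × Fin q ⊕ Fin 2) :=
  SimpleGraph.fromRel (fun x y =>
    match x, y with
    | Sum.inl (i, a), Sum.inl (j, b) => i = j ∧ (a : ℕ) + 1 = (b : ℕ)
    | Sum.inr s, Sum.inl (_, a) => (s = 0 ∧ (a : ℕ) = 0) ∨ (s = 1 ∧ (a : ℕ) = q - 1)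
    | _, _ => False)

lemma wm_adj_ll {p q : ℕ} {i j : Fin p} {a b : Fin q} :
    (watermelon p q).Adj (Sum.inl (i,a)) (Sum.inl (j,b)) ↔
      i = j ∧ ((a : ℕ) + 1 = b ∨ (b : ℕ) + 1 = a) := by
  simp only [watermelon, SimpleGraph.fromRel_adj]
  constructor
  · rintro ⟨hne, h | h⟩ <;> exact ⟨h.1.symm ▸ h.1 ▸ (by tauto), by tauto⟩
  · rintro ⟨rfl, h | h⟩
    · exact ⟨by simp; omega, Or.inl ⟨rfl, h⟩⟩
    · exact ⟨by simp; omega, Or.inr ⟨rfl, h⟩⟩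

lemma wm_adj_rl {p q : ℕ} {s : Fin 2} {i : Fin p} {a : Fin q} :
    (watermelon p q).Adj (Sum.inr s) (Sum.inl (i,a)) ↔
      (s = 0 ∧ (a : ℕ) = 0) ∨ (s = 1 ∧ (a : ℕ) = q - 1) := by
  simp only [watermelon, SimpleGraph.fromRel_adj]
  constructor
  · rintro ⟨hne, h | h⟩
    · exact h
    · exact h.elim
  · intro h; exact ⟨by simp, Or.inl h⟩

lemma wm_adj_rr {p q : ℕ} {s t : Fin 2} :
    ¬ (watermelon p q).Adj (Sum.inr s) (Sum.inr t) := by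
  simp only [watermelon, SimpleGraph.fromRel_adj]
  rintro ⟨hne, h | h⟩ <;> exact h

section
variable {p q : ℕ} (f : Fin p → Fin q)

def Sf (f : Fin p → Fin q) : Set (Fin p × Fin q ⊕ Fin 2) :=
  {x | ∃ i : Fin p, x = Sum.inl (i, f i)}

def inA (f : Fin p → Fin q) : (Fin p × Fin q ⊕ Fin 2) → Prop
  | Sum.inl (i, a) => (a : ℕ) < f i
  | Sum.inr s => s = 0

lemma step_inA {x y : Fin p × Fin q ⊕ Fin 2} (hx : inA f x) (hxS : x ∉ Sf f)
    (hyS : y ∉ Sf f) (hadj : (watermelon p q).Adj x y) : inA f y := by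
  match x, y with
  | Sum.inl (i, a), Sum.inl (j, b) =>
    rw [wm_adj_ll] at hadj
    obtain ⟨rfl, h | h⟩ := hadj
    · have hb : (b : ℕ) ≠ f i := fun hb => hyS ⟨i, by simp [Fin.ext_iff, hb]⟩
      simp only [inA] at hx ⊢; omega
    · simp only [inA] at hx ⊢; omega
  | Sum.inl (i, a), Sum.inr s =>
    rw [← (watermelon p q).adj_comm, wm_adj_rl] at hadj
    rcases hadj with ⟨hs, _⟩ | ⟨hs, ha⟩
    · exact hs
    · exfalso
      simp only [inA] at hx
      have : (f i : ℕ) < q := (f i).isLt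
      omega
  | Sum.inr s, Sum.inl (j, b) =>
    rw [wm_adj_rl] at hadj
    rcases hadj with ⟨hs, hb⟩ | ⟨hs, _⟩
    · have hb' : (b : ℕ) ≠ f j := fun h => hyS ⟨j, by simp [Fin.ext_iff, h]⟩
      simp only [inA]
      omega
    · exfalso
      have hx0 : s = 0 := hx
      rw [hx0] at hs
      exact absurd hs (by decide)
  | Sum.inr s, Sum.inr t => exact absurd hadj wm_adj_rr

lemma walk_inA {x y : Fin p × Fin q ⊕ Fin 2} (w : (watermelon p q).Walk x y)
    (hS : ∀ z ∈ w.support, z ∉ Sf f) (hx : inA f x) : inA f y := by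
  induction w with
  | nil => exact hx
  | cons h w ih =>
    rename_i a b c
    apply ih
    · intro z hz; exact hS z (by simp [hz])
    · exact step_inA f hx (hS a (by simp)) (hS b (by simp)) h

lemma rowWalk {i : Fin p} (hq : 1 ≤ q) :
    ∀ (n : ℕ) (a : Fin q), (a : ℕ) + n = q - 1 →
    ∃ w : (watermelon p q).Walk (Sum.inl (i, a)) (Sum.inr 1),
      ∀ z ∈ w.support, z = Sum.inr 1 ∨ ∃ b : Fin q, z = Sum.inl (i, b) := by
  intro n
  induction n with
  | zero =>
    intro a ha
    have hadj : (watermelon p q).Adj (Sum.inl (i, a)) (Sum.inr 1) := by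
      rw [← (watermelon p q).adj_comm, wm_adj_rl]
      exact Or.inr ⟨rfl, by omega⟩
    exact ⟨SimpleGraph.Walk.cons hadj SimpleGraph.Walk.nil, by
      intro z hz; simp at hz
      rcases hz with rfl | rfl
      · exact Or.inr ⟨a, rfl⟩
      · exact Or.inl rfl⟩
  | succ n ih =>
    intro a ha
    have h1 : (a : ℕ) + 1 < q := by omega
    obtain ⟨w, hw⟩ := ih ⟨(a : ℕ) + 1, h1⟩ (by simp; omega)
    have hadj : (watermelon p q).Adj (Sum.inl (i, a)) (Sum.inl (i, (⟨(a:ℕ)+1, h1⟩ : Fin q))) := by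
      rw [wm_adj_ll]; exact ⟨rfl, Or.inl rfl⟩
    exact ⟨SimpleGraph.Walk.cons hadj w, by
      intro z hz; simp at hz
      rcases hz with rfl | hz
      · exact Or.inr ⟨a, rfl⟩
      · exact hw z hz⟩

lemma Sf_isMinSep (hp : 1 ≤ p) (hq : 1 ≤ q) :
    IsMinSep (watermelon p q) (Sf f) (Sum.inr 0) (Sum.inr 1) := by
  constructor
  · refine ⟨by rintro ⟨i, h⟩; exact (nomatch h),
      by rintro ⟨i, h⟩; exact (nomatch h), ?_⟩
    rintro ⟨w, hw⟩
    have := walk_inA f w hw (by simp [inA])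
    simp [inA] at this
  · rintro T hT ⟨hu, hv, hR⟩
    apply hR
    -- find i with Sum.inl (i, f i) ∉ T
    have : ∃ x ∈ Sf f, x ∉ T := by
      by_contra h
      push_neg at h
      exact hT.2 h
    obtain ⟨x, ⟨i, rfl⟩, hxT⟩ := this
    -- walk u → (i,0) → ... → v
    have h0 : (0 : ℕ) < q := hq
    obtain ⟨w, hw⟩ := rowWalk (p := p) (i := i) hq (q - 1) ⟨0, h0⟩ (by simp)
    have hadj : (watermelon p q).Adj (Sum.inr 0) (Sum.inl (i, (⟨0, h0⟩ : Fin q))) := by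
      rw [wm_adj_rl]; exact Or.inl ⟨rfl, rfl⟩
    refine ⟨SimpleGraph.Walk.cons hadj w, ?_⟩
    intro z hz hzT
    simp at hz
    have hzS : z ∈ Sf f := hT.1 hzT
    obtain ⟨j, rfl⟩ := hzS
    rcases hz with h | hz
    · exact (nomatch h)
    · rcases hw _ hz with h | ⟨b, hb⟩
      · exact (nomatch h)
      · have hpair : (j, f j) = (i, b) := Sum.inl.inj hb
        have hji : j = i := (Prod.ext_iff.mp hpair).1
        subst hji
        exact hxT hzT

theorem statement_17 (p q : ℕ) (hp : 1 ≤ p) (hq : 1 ≤ q) :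
    (∀ f : Fin p → Fin q,
      IsMinSep (watermelon p q) {x | ∃ i : Fin p, x = Sum.inl (i, f i)}
        (Sum.inr 0) (Sum.inr 1)) ∧
    q ^ p ≤ {S : Set (Fin p × Fin q ⊕ Fin 2) |
        IsMinSep (watermelon p q) S (Sum.inr 0) (Sum.inr 1)}.ncard := by
  have hmin : ∀ f : Fin p → Fin q,
      IsMinSep (watermelon p q) {x | ∃ i : Fin p, x = Sum.inl (i, f i)}
        (Sum.inr 0) (Sum.inr 1) := fun f => Sf_isMinSep f hp hq
  refine ⟨hmin, ?_⟩
  have hinj : Function.Injective (fun f : Fin p → Fin q => Sf f) := by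
    intro f g h
    funext i
    have h' : Sf f = Sf g := h
    have hm : Sum.inl (i, f i) ∈ Sf g := h' ▸ ⟨i, rfl⟩
    obtain ⟨j, hj⟩ := hm
    have hpair : (i, f i) = (j, g j) := Sum.inl.inj hj
    have h1 : i = j := (Prod.ext_iff.mp hpair).1
    subst h1
    exact (Prod.ext_iff.mp hpair).2
  have hsub : Set.range (fun f : Fin p → Fin q => Sf f) ⊆
      {S : Set (Fin p × Fin q ⊕ Fin 2) |
        IsMinSep (watermelon p q) S (Sum.inr 0) (Sum.inr 1)} := by
    rintro S ⟨f, rfl⟩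
    exact hmin f
  calc q ^ p = (Set.range (fun f : Fin p → Fin q => Sf f)).ncard := by
        rw [← Nat.card_coe_set_eq, Nat.card_range_of_injective hinj]
        simp [Nat.card_eq_fintype_card]
    _ ≤ _ := Set.ncard_le_ncard hsub (Set.toFinite _)
end
end
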